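/- Let D be a division ring, k a field contained in the center of D, and τ a k-linear ring anti-automorphism of D with τ ∘ τ = id. Let R = AddMonoidAlgebra D (Fin n →₀ ℤ) be the ring of Laurent polynomials in n central variables t₁,…,tₙ with coefficients in D, and let σ : R → R be the additive bijection applying τ to each coefficient (σ(Σ_e c_e t^e) = Σ_e τ(c_e) t^e). Fix units α₁,…,α_m ∈ kˣ and exponent vectors a₁,…,a_m ∈ ℤⁿ whose images in (ℤ/2ℤ)ⁿ are pairwise distinct. Then for every m-tuple (x₁,…,x_m) of elements of R which are not all zero, the element Σ_{i=1}^m αᵢ t^{aᵢ} σ(xᵢ) xᵢ of R is nonzero, where t^{aᵢ} denotes the monomial with coefficient 1 and exponent vector aᵢ. -/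

import Mathlib

open AddMonoidAlgebra in

private lemma apply_add_aux1 {D : Type} [Semiring D] {n : ℕ}
    (p q : AddMonoidAlgebra D (Fin n →₀ ℤ)) (ap aq : Fin n →₀ ℤ)
    (hp : ∀ e ∈ p.coeff.support, toLex e ≤ toLex ap)
    (hq : ∀ e ∈ q.coeff.support, toLex e ≤ toLex aq) :
    (p * q).coeff (ap + aq) = p.coeff ap * q.coeff aq := by
  classical
  rw [AddMonoidAlgebra.coeff_mul]
  rw [Finsupp.sum, Finset.sum_eq_single ap]
  · rw [Finsupp.sum, Finset.sum_eq_single aq]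
    · rw [if_pos rfl]
    · intro e he hne
      refine if_neg fun hEq => ?_
      have h1 : toLex e < toLex aq := (hq e he).lt_of_ne (fun h => hne (toLex.injective h))
      have h2 : toLex ap + toLex e < toLex ap + toLex aq := add_lt_add_right h1 _
      exact h2.ne (congrArg toLex hEq)
    · intro h
      simp [Finsupp.notMem_support_iff.mp h]
  · intro e he hne
    refine Finset.sum_eq_zero fun f hf => if_neg fun hEq => ?_
    have h1 : toLex e < toLex ap := (hp e he).lt_of_ne (fun h => hne (toLex.injective h))
    have h2 : toLex e + toLex f < toLex ap + toLex aq :=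
      add_lt_add_of_lt_of_le h1 (hq f hf)
    exact h2.ne (congrArg toLex hEq)
  · intro h
    refine Finset.sum_eq_zero fun f hf => ?_
    simp [Finsupp.notMem_support_iff.mp h]

/-- Let `D` be a division ring, `k` a field contained in the center of `D`
(i.e. `D` is a `k`-algebra), and `τ` a `k`-linear ring anti-automorphism of `D` with
`τ ∘ τ = id`. Let `R = AddMonoidAlgebra D (Fin n →₀ ℤ)` be the ring of Laurent
polynomials in `n` central variables with coefficients in `D`, and let `σ : R → R` be
the additive bijection applying `τ` to each coefficient. Fix units `α₁, …, α_m ∈ kˣ`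
and exponent vectors `a₁, …, a_m ∈ ℤⁿ` whose images in `(ℤ/2ℤ)ⁿ` are pairwise distinct.
Then for every `m`-tuple `(x₁, …, x_m)` of elements of `R` which are not all zero, the
element `∑ i, αᵢ t^{aᵢ} σ(xᵢ) xᵢ` of `R` is nonzero, where `αᵢ t^{aᵢ}` is the monomial
with coefficient `algebraMap k D αᵢ` and exponent vector `aᵢ`. -/
theorem laurent_sum_ne_zero (k D : Type) [Field k] [DivisionRing D] [Algebra k D]
    (τ : D → D)
    (hτadd : ∀ x y : D, τ (x + y) = τ x + τ y)
    (hτmul : ∀ x y : D, τ (x * y) = τ y * τ x)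
    (hτone : τ 1 = 1)
    (hτlin : ∀ (c : k) (x : D), τ (c • x) = c • τ x)
    (hτinvol : ∀ x : D, τ (τ x) = x)
    (n m : ℕ) (α : Fin m → kˣ) (a : Fin m → (Fin n →₀ ℤ))
    (ha : Function.Injective fun i : Fin m => fun j : Fin n => ((a i j : ZMod 2)))
    (σ : AddMonoidAlgebra D (Fin n →₀ ℤ) → AddMonoidAlgebra D (Fin n →₀ ℤ))
    (hσ : ∀ (x : AddMonoidAlgebra D (Fin n →₀ ℤ)) (e : Fin n →₀ ℤ), (σ x).coeff e = τ (x.coeff e))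
    (x : Fin m → AddMonoidAlgebra D (Fin n →₀ ℤ))
    (hx : ∃ i, x i ≠ 0) :
    ∑ i : Fin m,
      AddMonoidAlgebra.single (a i) (algebraMap k D (α i)) * σ (x i) * x i ≠ 0 := by
  classical
  obtain ⟨iq, hiq⟩ := hx
  -- basic facts about τ
  have hτ0 : τ 0 = 0 := by
    have h := hτadd 0 0
    rw [add_zero] at h
    exact (left_eq_add.mp h)
  have hτzero_iff : ∀ c : D, τ c = 0 ↔ c = 0 := by
    intro c
    constructor
    · intro h; rw [← hτinvol c, h, hτ0]
    · rintro rfl; exact hτ0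
  -- support of σ y equals support of y
  have hσsupp : ∀ y : AddMonoidAlgebra D (Fin n →₀ ℤ), (σ y).coeff.support = y.coeff.support := by
    intro y
    ext e
    simp only [Finsupp.mem_support_iff, hσ, ne_eq, hτzero_iff]
  -- choose maximal exponents
  have hsupp : ∀ i : Fin m, ∃ bi : Fin n →₀ ℤ,
      (x i ≠ 0 → bi ∈ (x i).coeff.support) ∧ ∀ e ∈ (x i).coeff.support, toLex e ≤ toLex bi := by
    intro i
    by_cases hi : x i = 0
    · exact ⟨0, fun h => absurd hi h, by simp [hi]⟩
    · obtain ⟨bb, hb1, hb2⟩ := Finset.exists_max_image (x i).coeff.support toLex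
        (Finsupp.support_nonempty_iff.mpr (by simpa using hi))
      exact ⟨bb, fun _ => hb1, hb2⟩
  choose b hbmem hbmax using hsupp
  set S : Finset (Fin m) := Finset.univ.filter (fun i => x i ≠ 0) with hS
  have hSne : S.Nonempty := ⟨iq, by simp [hS, hiq]⟩
  set F : Fin m → Lex (Fin n →₀ ℤ) := fun i => toLex (a i + b i + b i) with hF
  obtain ⟨i₀, hi₀S, hFmax⟩ := Finset.exists_max_image S F hSne
  have hx₀ : x i₀ ≠ 0 := by simpa [hS] using hi₀S
  set e₀ : Fin n →₀ ℤ := a i₀ + b i₀ + b i₀ with he₀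
  -- term function
  set f : Fin m → AddMonoidAlgebra D (Fin n →₀ ℤ) := fun i =>
    AddMonoidAlgebra.single (a i) (algebraMap k D (α i)) * σ (x i) * x i with hf
  -- strict comparison for i ≠ i₀ in S
  have hstrict : ∀ i ∈ S, i ≠ i₀ → F i < F i₀ := by
    intro i hi hne
    refine (hFmax i hi).lt_of_ne fun hEq => hne ?_
    have h2 : a i + b i + b i = a i₀ + b i₀ + b i₀ := toLex.injective hEq
    apply ha
    funext j
    have h3 : a i j + b i j + b i j = a i₀ j + b i₀ j + b i₀ j := by
      have := congrArg (fun v : Fin n →₀ ℤ => v j) h2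
      simpa using this
    have h4 : ((a i j + b i j + b i j : ℤ) : ZMod 2)
        = ((a i₀ j + b i₀ j + b i₀ j : ℤ) : ZMod 2) := by rw [h3]
    push_cast at h4
    rw [add_assoc, add_assoc, CharTwo.add_self_eq_zero, CharTwo.add_self_eq_zero,
        add_zero, add_zero] at h4
    exact h4
  -- support bounds
  have hsuppbound : ∀ i ∈ S, ∀ e ∈ (f i).coeff.support, toLex e ≤ F i := by
    intro i hi e he
    have h1 := AddMonoidAlgebra.support_coeff_mul_subset
      (AddMonoidAlgebra.single (a i) (algebraMap k D (α i)) * σ (x i)) (x i) he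
    rw [Finset.mem_add] at h1
    obtain ⟨u, hu, v, hv, rfl⟩ := h1
    have h2 := AddMonoidAlgebra.support_coeff_mul_subset
      (AddMonoidAlgebra.single (a i) (algebraMap k D (α i))) (σ (x i)) hu
    rw [Finset.mem_add] at h2
    obtain ⟨w, hw, z, hz, rfl⟩ := h2
    have hwa : w = a i := by
      have := Finsupp.support_single_subset hw
      simpa using this
    rw [hσsupp] at hz
    have hz' : toLex z ≤ toLex (b i) := hbmax i z hz
    have hv' : toLex v ≤ toLex (b i) := hbmax i v hv
    calc toLex (w + z + v) = toLex w + toLex z + toLex v := rfl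
      _ ≤ toLex w + toLex (b i) + toLex (b i) := add_le_add (add_le_add_right hz' _) hv'
      _ = toLex (a i) + toLex (b i) + toLex (b i) := by rw [hwa]
      _ = F i := rfl
  -- coefficient of f i₀ at e₀
  set A : D := algebraMap k D (α i₀) with hA
  have hAne : A ≠ 0 := by
    simp only [hA, ne_eq, map_eq_zero_iff _ (algebraMap k D).injective]
    exact Units.ne_zero _
  set c : D := (x i₀).coeff (b i₀) with hc
  have hcne : c ≠ 0 := Finsupp.mem_support_iff.mp (hbmem i₀ hx₀)
  have hval : (f i₀).coeff e₀ = A * τ c * c := by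
    have hsingle : ∀ e ∈ (AddMonoidAlgebra.single (a i₀) A
        : AddMonoidAlgebra D (Fin n →₀ ℤ)).coeff.support, toLex e ≤ toLex (a i₀) := by
      intro e he
      have := Finsupp.support_single_subset he
      simp only [Finset.mem_singleton] at this
      rw [this]
    have hσb : ∀ e ∈ (σ (x i₀)).coeff.support, toLex e ≤ toLex (b i₀) := by
      intro e he; rw [hσsupp] at he; exact hbmax i₀ e he
    have hxb : ∀ e ∈ (x i₀).coeff.support, toLex e ≤ toLex (b i₀) := hbmax i₀
    have hPbound : ∀ e ∈ (AddMonoidAlgebra.single (a i₀) A * σ (x i₀)).coeff.support,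
        toLex e ≤ toLex (a i₀ + b i₀) := by
      intro e he
      have h1 := AddMonoidAlgebra.support_coeff_mul_subset
        (AddMonoidAlgebra.single (a i₀) A) (σ (x i₀)) he
      rw [Finset.mem_add] at h1
      obtain ⟨u, hu, v, hv, rfl⟩ := h1
      calc toLex (u + v) = toLex u + toLex v := rfl
        _ ≤ toLex (a i₀) + toLex (b i₀) := add_le_add (hsingle u hu) (hσb v hv)
        _ = toLex (a i₀ + b i₀) := rfl
    have step1 : (f i₀).coeff e₀ = (AddMonoidAlgebra.single (a i₀) A * σ (x i₀)).coeff (a i₀ + b i₀) * c := by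
      rw [hf, he₀]
      exact apply_add_aux1 _ _ _ _ hPbound hxb
    have step2 : (AddMonoidAlgebra.single (a i₀) A * σ (x i₀)).coeff (a i₀ + b i₀)
        = A * τ c := by
      rw [apply_add_aux1 _ _ _ _ hsingle hσb]
      rw [hσ]
      simp [AddMonoidAlgebra.coeff_single, hc]
    rw [step1, step2]
  have hvalne : (f i₀).coeff e₀ ≠ 0 := by
    rw [hval]
    exact mul_ne_zero (mul_ne_zero hAne ((hτzero_iff c).not.mpr hcne)) hcne
  -- other terms vanish at e₀
  have hzero : ∀ i : Fin m, i ≠ i₀ → (f i).coeff e₀ = 0 := by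
    intro i hne
    by_cases hi : i ∈ S
    · -- strict degree comparison
      rw [← Finsupp.notMem_support_iff]
      intro hmem
      have h1 : toLex e₀ ≤ F i := hsuppbound i hi e₀ hmem
      have h2 : F i < F i₀ := hstrict i hi hne
      have h3 : F i₀ = toLex e₀ := rfl
      exact absurd (h1.trans_lt h2) (by rw [h3]; exact lt_irrefl _)
    · have hxi : x i = 0 := by
        by_contra hxx
        exact hi (by simp [hS, hxx])
      simp [hf, hxi]
  -- evaluate the sum at e₀
  intro hsum
  have := congrArg (fun p : AddMonoidAlgebra D (Fin n →₀ ℤ) => p.coeff e₀) hsum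
  simp only [AddMonoidAlgebra.coeff_zero, Finsupp.coe_zero, Pi.zero_apply] at this
  rw [AddMonoidAlgebra.coeff_sum, Finsupp.finset_sum_apply] at this
  rw [Finset.sum_eq_single_of_mem i₀ (Finset.mem_univ _)
    (fun j _ hj => hzero j hj)] at this
  exact hvalne this
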